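/- Let E_1, …, E_m be Banach lattices and let F be a Banach space. The set of all sporadically M-weakly compact m-linear operators, that is, all continuous m-linear operators A : E_1 × ⋯ × E_m → F sending norm bounded sporadically disjoint sequences in E_1 × ⋯ × E_m to norm null sequences in F, is a closed linear subspace of L(E_1,…,E_m;F). -/

import Mathlib

open Filter Topology Bornology

/-- The set of sporadically M-weakly compact `m`-linear operators from Banach lattices
`E₁, …, E_m` to a Banach space `F`: operators sending norm bounded sporadically disjoint
sequences in `E₁ × ⋯ × E_m` to norm null sequences in `F`. Two elements of the product are
sporadically disjoint when they are disjoint in some coordinate. -/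
def SporadicallyMWeaklyCompactMultilinear {m : ℕ} (E : Fin m → Type*) (F : Type*)
    [∀ i, NormedAddCommGroup (E i)] [∀ i, Lattice (E i)]
    [∀ i, HasSolidNorm (E i)] [∀ i, IsOrderedAddMonoid (E i)] [∀ i, NormedSpace ℝ (E i)]
    [NormedAddCommGroup F] [NormedSpace ℝ F] :
    Set (ContinuousMultilinearMap ℝ E F) :=
  {A | ∀ x : ℕ → ∀ i, E i, IsBounded (Set.range x) →
    (∀ j k, j ≠ k → ∃ i, |x j i| ⊓ |x k i| = 0) →
    Tendsto (fun n => ‖A (x n)‖) atTop (nhds 0)}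

/-- For Banach lattices `E₁, …, E_m` and a Banach space `F`, the set of sporadically
M-weakly compact `m`-linear operators is a closed linear subspace of `L(E₁,…,E_m;F)`. -/
theorem stmt9 {m : ℕ} (E : Fin m → Type*) (F : Type*)
    [∀ i, NormedAddCommGroup (E i)] [∀ i, Lattice (E i)]
    [∀ i, HasSolidNorm (E i)] [∀ i, IsOrderedAddMonoid (E i)] [∀ i, NormedSpace ℝ (E i)]
    [∀ i, CompleteSpace (E i)]
    [NormedAddCommGroup F] [NormedSpace ℝ F] [CompleteSpace F] :
    IsClosed (SporadicallyMWeaklyCompactMultilinear E F) ∧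
      (0 : ContinuousMultilinearMap ℝ E F) ∈ SporadicallyMWeaklyCompactMultilinear E F ∧
      (∀ A₁ ∈ SporadicallyMWeaklyCompactMultilinear E F,
        ∀ A₂ ∈ SporadicallyMWeaklyCompactMultilinear E F,
        A₁ + A₂ ∈ SporadicallyMWeaklyCompactMultilinear E F) ∧
      (∀ (c : ℝ), ∀ A ∈ SporadicallyMWeaklyCompactMultilinear E F,
        c • A ∈ SporadicallyMWeaklyCompactMultilinear E F) := by
  refine ⟨?_, ?_, ?_, ?_⟩
  · refine isClosed_of_closure_subset ?_
    intro A hA x hx hdisj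
    obtain ⟨C, hC⟩ := isBounded_iff_forall_norm_le.mp hx
    have hC' : ∀ n, ∏ i, ‖x n i‖ ≤ (C + 1) ^ m := by
      intro n
      calc ∏ i, ‖x n i‖ ≤ ∏ _i : Fin m, (C + 1) := by
            refine Finset.prod_le_prod (fun i _ => norm_nonneg _) (fun i _ => ?_)
            have h1 : ‖x n i‖ ≤ ‖x n‖ := norm_le_pi_norm (x n) i
            have h2 : ‖x n‖ ≤ C := hC _ (Set.mem_range_self n)
            linarith
        _ = (C + 1) ^ m := by simp
    have hCpos : (0:ℝ) < C + 1 := by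
      have := (norm_nonneg (x 0)).trans (hC _ (Set.mem_range_self 0)); linarith
    rw [Metric.tendsto_atTop]
    intro ε hε
    have hδ : (0:ℝ) < ε / (2 * ((C + 1) ^ m)) := by positivity
    obtain ⟨B, hBmem, hAB⟩ := Metric.mem_closure_iff.mp hA _ hδ
    have hB := hBmem x hx hdisj
    rw [Metric.tendsto_atTop] at hB
    obtain ⟨N, hN⟩ := hB (ε / 2) (by linarith)
    refine ⟨N, fun n hn => ?_⟩
    have h1 : ‖A (x n)‖ ≤ ‖(A - B) (x n)‖ + ‖B (x n)‖ := by
      have : A (x n) = (A - B) (x n) + B (x n) := by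
        simp [ContinuousMultilinearMap.sub_apply]
      rw [this]; exact norm_add_le _ _
    have h2 : ‖(A - B) (x n)‖ ≤ ‖A - B‖ * ∏ i, ‖x n i‖ :=
      ContinuousMultilinearMap.le_opNorm _ _
    have h3 : ‖A - B‖ * ∏ i, ‖x n i‖ ≤ ‖A - B‖ * (C + 1) ^ m :=
      mul_le_mul_of_nonneg_left (hC' n) (norm_nonneg _)
    have h4 : ‖A - B‖ < ε / (2 * ((C + 1) ^ m)) := by
      rw [Metric.mem_closure_iff] at hA
      rwa [dist_eq_norm] at hAB
    have h5 : ‖A - B‖ * (C + 1) ^ m < ε / 2 := by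
      have hp : (0:ℝ) < (C + 1) ^ m := by positivity
      calc ‖A - B‖ * (C + 1) ^ m < (ε / (2 * ((C + 1) ^ m))) * (C + 1) ^ m :=
            mul_lt_mul_of_pos_right h4 hp
        _ = ε / 2 := by field_simp
    have h6 : ‖B (x n)‖ < ε / 2 := by
      have := hN n hn
      rwa [Real.dist_eq, sub_zero, abs_of_nonneg (norm_nonneg _)] at this
    rw [Real.dist_eq, sub_zero, abs_of_nonneg (norm_nonneg _)]
    linarith
  · intro x _ _
    simp only [ContinuousMultilinearMap.zero_apply, norm_zero]
    exact tendsto_const_nhds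
  · intro A₁ h₁ A₂ h₂ x hx hd
    have := (h₁ x hx hd).add (h₂ x hx hd)
    rw [add_zero] at this
    refine squeeze_zero (fun n => norm_nonneg _) (fun n => ?_) this
    simp only [ContinuousMultilinearMap.add_apply]
    exact norm_add_le _ _
  · intro c A hA x hx hd
    have := (hA x hx hd).const_mul |c|
    rw [mul_zero] at this
    refine this.congr fun n => ?_
    simp [ContinuousMultilinearMap.smul_apply, norm_smul]
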